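/- arXiv:2403.09650 — 2 statements merged into one kernel-verified Lean document; each statement's English description precedes it below -/
import Mathlib

section
/- Let $\{u_i\}_{i=0}^{n}$ and $\{v_i\}_{i=0}^{n}$ be sequences of closed bounded intervals with $u_0 = v_0 = [0,0]$, such that all endpoint sequences $\underline{u_i}, \overline{u_i}, \underline{v_i}, \overline{v_i}$ are non-decreasing and the lengths $\mathrm{len}(u_i)$ and $\mathrm{len}(v_i)$ are non-decreasing. Then $\sum_{i=1}^{n} \|u_{i-1}\cdot\nabla v_i + v_i\cdot\nabla u_i\| \leq \frac{n}{2} \sum_{i=1}^{n} \big(\|\nabla u_i\|^2 + \|\nabla v_i\|^2\big)$, where $\nabla w_i = w_i \ominus_g w_{i-1}$ and $\|[a,b]\| = \max\{|a|,|b|\}$. -/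
/-- gH-difference of intervals given by endpoint pairs. -/
def gH (u v : ℝ × ℝ) : ℝ × ℝ :=
  (min (u.1 - v.1) (u.2 - v.2), max (u.1 - v.1) (u.2 - v.2))

/-- Interval multiplication. -/
def imul (u v : ℝ × ℝ) : ℝ × ℝ :=
  (min (min (u.1 * v.1) (u.1 * v.2)) (min (u.2 * v.1) (u.2 * v.2)),
   max (max (u.1 * v.1) (u.1 * v.2)) (max (u.2 * v.1) (u.2 * v.2)))

/-- Minkowski addition of intervals. -/
def iadd (u v : ℝ × ℝ) : ℝ × ℝ := (u.1 + v.1, u.2 + v.2)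

/-- Quasi-norm of an interval. -/
def inorm (u : ℝ × ℝ) : ℝ := max |u.1| |u.2|

lemma gH_eq {a b c d : ℝ} (h : a - c ≤ b - d) : gH (a, b) (c, d) = (a - c, b - d) := by
  simp [gH, min_eq_left h, max_eq_right h]

lemma imul_nn {a b c d : ℝ} (ha : 0 ≤ a) (hab : a ≤ b) (hc : 0 ≤ c) (hcd : c ≤ d) :
    imul (a, b) (c, d) = (a * c, b * d) := by
  have hb : 0 ≤ b := ha.trans hab
  have hd : 0 ≤ d := hc.trans hcd
  have h1 : a * c ≤ a * d := by nlinarith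
  have h2 : a * d ≤ b * d := by nlinarith
  have h3 : a * c ≤ b * c := by nlinarith
  have h4 : b * c ≤ b * d := by nlinarith
  simp only [imul]
  rw [min_eq_left h1, min_eq_left h4, min_eq_left h3,
      max_eq_right h1, max_eq_right h4, max_eq_right h2]

lemma inorm_iadd {p q r s : ℝ} (hp : 0 ≤ p) (hpq : p ≤ q) (hr : 0 ≤ r) (hrs : r ≤ s) :
    inorm (iadd (p, q) (r, s)) = q + s := by
  simp only [inorm, iadd]
  rw [abs_of_nonneg (by linarith), abs_of_nonneg (by linarith), max_eq_right (by linarith)]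

lemma inorm_nn {p q : ℝ} (hp : 0 ≤ p) (hpq : p ≤ q) : inorm (p, q) = q := by
  simp only [inorm]
  rw [abs_of_nonneg hp, abs_of_nonneg (hp.trans hpq), max_eq_right hpq]

theorem interval_opial_two_sequences
    (n : ℕ) (ulo uhi vlo vhi : ℕ → ℝ)
    (huvalid : ∀ i ≤ n, ulo i ≤ uhi i)
    (hvvalid : ∀ i ≤ n, vlo i ≤ vhi i)
    (hu0 : ulo 0 = 0 ∧ uhi 0 = 0) (hv0 : vlo 0 = 0 ∧ vhi 0 = 0)
    (hulo : ∀ i < n, ulo i ≤ ulo (i + 1))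
    (huhi : ∀ i < n, uhi i ≤ uhi (i + 1))
    (hvlo : ∀ i < n, vlo i ≤ vlo (i + 1))
    (hvhi : ∀ i < n, vhi i ≤ vhi (i + 1))
    (hulen : ∀ i < n, uhi i - ulo i ≤ uhi (i + 1) - ulo (i + 1))
    (hvlen : ∀ i < n, vhi i - vlo i ≤ vhi (i + 1) - vlo (i + 1)) :
    ∑ i ∈ Finset.Icc 1 n,
        inorm (iadd
          (imul (ulo (i - 1), uhi (i - 1)) (gH (vlo i, vhi i) (vlo (i - 1), vhi (i - 1))))
          (imul (vlo i, vhi i) (gH (ulo i, uhi i) (ulo (i - 1), uhi (i - 1)))))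
      ≤ (n : ℝ) / 2 *
        ∑ i ∈ Finset.Icc 1 n,
          ((inorm (gH (ulo i, uhi i) (ulo (i - 1), uhi (i - 1)))) ^ 2 +
           (inorm (gH (vlo i, vhi i) (vlo (i - 1), vhi (i - 1)))) ^ 2) := by
  -- nonnegativity of endpoints
  have hulo_nn : ∀ i, i ≤ n → 0 ≤ ulo i := by
    intro i
    induction i with
    | zero => intro _; rw [hu0.1]
    | succ k ih => intro h; exact (ih (by omega)).trans (hulo k (by omega))
  have huhi_nn : ∀ i, i ≤ n → 0 ≤ uhi i := fun i h => (hulo_nn i h).trans (huvalid i h)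
  have hvlo_nn : ∀ i, i ≤ n → 0 ≤ vlo i := by
    intro i
    induction i with
    | zero => intro _; rw [hv0.1]
    | succ k ih => intro h; exact (ih (by omega)).trans (hvlo k (by omega))
  have hvhi_nn : ∀ i, i ≤ n → 0 ≤ vhi i := fun i h => (hvlo_nn i h).trans (hvvalid i h)
  -- per-term simplification
  have hterm : ∀ i ∈ Finset.Icc 1 n,
      inorm (iadd
          (imul (ulo (i - 1), uhi (i - 1)) (gH (vlo i, vhi i) (vlo (i - 1), vhi (i - 1))))
          (imul (vlo i, vhi i) (gH (ulo i, uhi i) (ulo (i - 1), uhi (i - 1)))))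
        = uhi (i - 1) * (vhi i - vhi (i - 1)) + vhi i * (uhi i - uhi (i - 1)) := by
    intro i hi
    simp only [Finset.mem_Icc] at hi
    obtain ⟨h1, h2⟩ := hi
    have hi1 : i - 1 < n := by omega
    have hieq : i - 1 + 1 = i := by omega
    have hgu : gH (ulo i, uhi i) (ulo (i - 1), uhi (i - 1))
        = (ulo i - ulo (i - 1), uhi i - uhi (i - 1)) := by
      apply gH_eq; have := hulen (i - 1) hi1; rw [hieq] at this; linarith
    have hgv : gH (vlo i, vhi i) (vlo (i - 1), vhi (i - 1))
        = (vlo i - vlo (i - 1), vhi i - vhi (i - 1)) := by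
      apply gH_eq; have := hvlen (i - 1) hi1; rw [hieq] at this; linarith
    have hΔulo : 0 ≤ ulo i - ulo (i - 1) := by
      have := hulo (i - 1) hi1; rw [hieq] at this; linarith
    have hΔu : ulo i - ulo (i - 1) ≤ uhi i - uhi (i - 1) := by
      have := hulen (i - 1) hi1; rw [hieq] at this; linarith
    have hΔvlo : 0 ≤ vlo i - vlo (i - 1) := by
      have := hvlo (i - 1) hi1; rw [hieq] at this; linarith
    have hΔv : vlo i - vlo (i - 1) ≤ vhi i - vhi (i - 1) := by
      have := hvlen (i - 1) hi1; rw [hieq] at this; linarith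
    have ha : 0 ≤ ulo (i - 1) := hulo_nn (i - 1) (by omega)
    have hb : ulo (i - 1) ≤ uhi (i - 1) := huvalid (i - 1) (by omega)
    have hc : 0 ≤ vlo i := hvlo_nn i h2
    have hd : vlo i ≤ vhi i := hvvalid i h2
    rw [hgu, hgv,
      imul_nn ha hb hΔvlo hΔv,
      imul_nn hc hd hΔulo hΔu,
      inorm_iadd (mul_nonneg ha hΔvlo)
        (mul_le_mul hb hΔv hΔvlo (ha.trans hb))
        (mul_nonneg hc hΔulo)
        (mul_le_mul hd hΔu hΔulo (hc.trans hd))]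
  rw [Finset.sum_congr rfl hterm]
  have hrhs : ∀ i ∈ Finset.Icc 1 n,
      (inorm (gH (ulo i, uhi i) (ulo (i - 1), uhi (i - 1)))) ^ 2 +
        (inorm (gH (vlo i, vhi i) (vlo (i - 1), vhi (i - 1)))) ^ 2
      = (uhi i - uhi (i - 1)) ^ 2 + (vhi i - vhi (i - 1)) ^ 2 := by
    intro i hi
    simp only [Finset.mem_Icc] at hi
    obtain ⟨h1, h2⟩ := hi
    have hi1 : i - 1 < n := by omega
    have hieq : i - 1 + 1 = i := by omega
    have hgu : gH (ulo i, uhi i) (ulo (i - 1), uhi (i - 1))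
        = (ulo i - ulo (i - 1), uhi i - uhi (i - 1)) := by
      apply gH_eq; have := hulen (i - 1) hi1; rw [hieq] at this; linarith
    have hgv : gH (vlo i, vhi i) (vlo (i - 1), vhi (i - 1))
        = (vlo i - vlo (i - 1), vhi i - vhi (i - 1)) := by
      apply gH_eq; have := hvlen (i - 1) hi1; rw [hieq] at this; linarith
    have hΔulo : 0 ≤ ulo i - ulo (i - 1) := by
      have := hulo (i - 1) hi1; rw [hieq] at this; linarith
    have hΔu : ulo i - ulo (i - 1) ≤ uhi i - uhi (i - 1) := by
      have := hulen (i - 1) hi1; rw [hieq] at this; linarith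
    have hΔvlo : 0 ≤ vlo i - vlo (i - 1) := by
      have := hvlo (i - 1) hi1; rw [hieq] at this; linarith
    have hΔv : vlo i - vlo (i - 1) ≤ vhi i - vhi (i - 1) := by
      have := hvlen (i - 1) hi1; rw [hieq] at this; linarith
    rw [hgu, hgv, inorm_nn hΔulo hΔu, inorm_nn hΔvlo hΔv]
  rw [Finset.sum_congr rfl hrhs]
  -- reindex to range n
  rw [← Finset.Ico_add_one_right_eq_Icc, Finset.sum_Ico_eq_sum_range, Finset.sum_Ico_eq_sum_range, Nat.add_sub_cancel]
  have hre : ∀ j, 1 + j - 1 = j := fun j => by omega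
  -- telescoping LHS
  have htel : ∑ j ∈ Finset.range n,
      (uhi (1 + j - 1) * (vhi (1 + j) - vhi (1 + j - 1)) +
        vhi (1 + j) * (uhi (1 + j) - uhi (1 + j - 1)))
      = uhi n * vhi n := by
    have : ∀ j, uhi (1 + j - 1) * (vhi (1 + j) - vhi (1 + j - 1)) +
        vhi (1 + j) * (uhi (1 + j) - uhi (1 + j - 1))
        = uhi (j + 1) * vhi (j + 1) - uhi j * vhi j := by
      intro j; rw [hre, add_comm 1 j]; ring
    rw [Finset.sum_congr rfl fun j _ => this j, Finset.sum_range_sub (fun j => uhi j * vhi j),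
      hu0.2, hv0.2]
    ring
  rw [htel]
  -- Cauchy-Schwarz setup
  have hsumu : ∑ j ∈ Finset.range n, (uhi (j + 1) - uhi j) = uhi n := by
    rw [Finset.sum_range_sub uhi, hu0.2]; ring
  have hsumv : ∑ j ∈ Finset.range n, (vhi (j + 1) - vhi j) = vhi n := by
    rw [Finset.sum_range_sub vhi, hv0.2]; ring
  have hcsu : uhi n ^ 2 ≤ n * ∑ j ∈ Finset.range n, (uhi (j + 1) - uhi j) ^ 2 := by
    have := sq_sum_le_card_mul_sum_sq (s := Finset.range n)
      (f := fun j => uhi (j + 1) - uhi j)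
    rw [hsumu, Finset.card_range] at this
    exact_mod_cast this
  have hcsv : vhi n ^ 2 ≤ n * ∑ j ∈ Finset.range n, (vhi (j + 1) - vhi j) ^ 2 := by
    have := sq_sum_le_card_mul_sum_sq (s := Finset.range n)
      (f := fun j => vhi (j + 1) - vhi j)
    rw [hsumv, Finset.card_range] at this
    exact_mod_cast this
  have hsplit : ∑ j ∈ Finset.range n,
      ((uhi (1 + j) - uhi (1 + j - 1)) ^ 2 + (vhi (1 + j) - vhi (1 + j - 1)) ^ 2)
      = (∑ j ∈ Finset.range n, (uhi (j + 1) - uhi j) ^ 2) +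
        (∑ j ∈ Finset.range n, (vhi (j + 1) - vhi j) ^ 2) := by
    rw [← Finset.sum_add_distrib]
    exact Finset.sum_congr rfl fun j _ => by rw [hre, add_comm 1 j]
  rw [hsplit]
  nlinarith [sq_nonneg (uhi n - vhi n)]
end

section
/- Let $\{u_i\}_{i=0}^{m}$ be a sequence of closed bounded intervals with $u_0 = u_m = [0,0]$, and let $\lambda_1, \lambda_2 \geq 1$ be natural numbers. Suppose there exists an index $k$ with $1 \le k \le m-1$ such that on $\{0,\ldots,k\}$ both endpoint sequences of $u_i$ are non-decreasing and $\mathrm{len}(u_i)$ is non-decreasing, while on $\{k,\ldots,m\}$ both endpoint sequences are non-increasing and $\mathrm{len}(u_i)$ is non-increasing. Then $\sum_{i=1}^{m-1} \|u_i^{\lambda_1}(\nabla u_i)^{\lambda_2}\| \leq \frac{\lambda_2 (\lfloor m/2 \rfloor + 1)^{\lambda_1}}{\lambda_1 + \lambda_2} \sum_{i=1}^{m} \|\nabla u_i\|^{\lambda_1 + \lambda_2}$. -/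
/-- Power of an interval, as the image interval `{t^k : t ∈ u}`. -/
noncomputable def ipowI (u : ℝ × ℝ) (k : ℕ) : ℝ × ℝ :=
  (sInf ((fun t : ℝ => t ^ k) '' Set.Icc u.1 u.2),
   sSup ((fun t : ℝ => t ^ k) '' Set.Icc u.1 u.2))

open Finset


/-- Young-type inequality for natural powers. -/
lemma young2 (l1 l2 : ℕ) (hl1 : 1 ≤ l1) (hl2 : 1 ≤ l2) {x y : ℝ}
    (hx : 0 ≤ x) (hy : 0 ≤ y) :
    x ^ l1 * y ^ l2 ≤ ((l1 : ℝ) * x ^ (l1 + l2) + (l2 : ℝ) * y ^ (l1 + l2)) / ((l1 : ℝ) + l2) := by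
  have hl1' : (1:ℝ) ≤ (l1:ℝ) := by exact_mod_cast hl1
  have hl2' : (1:ℝ) ≤ (l2:ℝ) := by exact_mod_cast hl2
  have hp : (0 : ℝ) < (l1 : ℝ) + l2 := by linarith
  have h := Real.geom_mean_le_arith_mean2_weighted
    (w₁ := (l1 : ℝ) / ((l1:ℝ)+l2)) (w₂ := (l2 : ℝ) / ((l1:ℝ)+l2))
    (p₁ := x ^ (l1+l2)) (p₂ := y ^ (l1+l2))
    (by positivity) (by positivity) (by positivity) (by positivity)
    (by field_simp)
  have e1 : (x ^ (l1+l2)) ^ ((l1 : ℝ) / ((l1:ℝ)+l2)) = x ^ l1 := by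
    rw [← Real.rpow_natCast x (l1+l2), ← Real.rpow_mul hx, ← Real.rpow_natCast x l1]
    congr 1
    field_simp
    exact Nat.cast_add _ _
  have e2 : (y ^ (l1+l2)) ^ ((l2 : ℝ) / ((l1:ℝ)+l2)) = y ^ l2 := by
    rw [← Real.rpow_natCast y (l1+l2), ← Real.rpow_mul hy, ← Real.rpow_natCast y l2]
    congr 1
    field_simp
    exact Nat.cast_add _ _
  rw [e1, e2] at h
  calc x ^ l1 * y ^ l2 ≤ (l1:ℝ)/((l1:ℝ)+l2) * x ^ (l1+l2) + (l2:ℝ)/((l1:ℝ)+l2) * y ^ (l1+l2) := h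
    _ = ((l1 : ℝ) * x ^ (l1 + l2) + (l2 : ℝ) * y ^ (l1 + l2)) / ((l1 : ℝ) + l2) := by ring

lemma bern (t : ℕ) {x : ℝ} (hx : 0 ≤ x) :
    ((t : ℝ) + 1) * x ^ t ≤ (x + 1) ^ (t + 1) - x ^ (t + 1) := by
  induction t with
  | zero => simp
  | succ t ih =>
    have h2 : (x+1) * (((t:ℝ)+1) * x ^ t) ≤ (x+1) * ((x + 1) ^ (t + 1) - x ^ (t + 1)) :=
      mul_le_mul_of_nonneg_left ih (by linarith)
    have e1 : (x+1) * ((x + 1) ^ (t + 1) - x ^ (t + 1))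
        = (x+1)^(t+1+1) - x^(t+1+1) - x^(t+1) + x * (((t:ℝ)+1) * x^t) - ((t:ℝ)+1)*(x*x^t) := by
      ring
    have e2 : x * x ^ t = x ^ (t+1) := by ring
    have hxt : 0 ≤ x ^ t := by positivity
    push_cast
    nlinarith [h2, hxt, pow_nonneg hx (t+1)]

/-- telescoping sum over `Icc j n`. -/
lemma tele (f : ℕ → ℝ) (j n : ℕ) (hj : j ≤ n + 1) :
    ∑ i ∈ Finset.Icc j n, (f (i+1) - f i) = f (n+1) - f j := by
  rw [← Finset.Ico_add_one_right_eq_Icc, Finset.sum_Ico_eq_sub _ hj, Finset.sum_range_sub,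
    Finset.sum_range_sub]
  ring

/-- the key per-term bound. -/
lemma termb (l1 l2 : ℕ) (hl1 : 1 ≤ l1) (hl2 : 1 ≤ l2) (i : ℕ) (hi : 1 ≤ i)
    (σ : ℕ → ℝ) (hσ : ∀ j, 0 ≤ σ j) (g y : ℝ) (hg0 : 0 ≤ g) (hy : 0 ≤ y)
    (hgL : g ≤ ∑ j ∈ Finset.Icc 1 i, σ j) :
    g ^ l1 * y ^ l2 ≤ ((l1:ℝ) * (i:ℝ)^(l1-1) * (∑ j ∈ Finset.Icc 1 i, σ j ^ (l1+l2))
        + (l2:ℝ) * (i:ℝ)^l1 * y^(l1+l2)) / ((l1:ℝ)+(l2:ℝ)) := by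
  have hl1' : (1:ℝ) ≤ (l1:ℝ) := by exact_mod_cast hl1
  have hl2' : (1:ℝ) ≤ (l2:ℝ) := by exact_mod_cast hl2
  have hp : (0:ℝ) < (l1:ℝ)+(l2:ℝ) := by linarith
  have hci : (0:ℝ) < (i:ℝ) := by exact_mod_cast hi
  set L := ∑ j ∈ Finset.Icc 1 i, σ j with hL
  set S := ∑ j ∈ Finset.Icc 1 i, σ j ^ (l1+l2) with hS
  have hL0 : 0 ≤ L := Finset.sum_nonneg fun j _ => hσ j
  have hS0 : 0 ≤ S := Finset.sum_nonneg fun j _ => pow_nonneg (hσ j) _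
  obtain ⟨q, hq⟩ : ∃ q, l1 + l2 = q + 1 := ⟨l1+l2-1, by omega⟩
  -- power mean: L^(l1+l2) ≤ i^q * S
  have hpm : L ^ (l1+l2) ≤ (i:ℝ)^q * S := by
    have h := pow_sum_div_card_le_sum_pow (f := σ) (s := Finset.Icc 1 i)
      (fun j _ => hσ j) q
    rw [Nat.card_Icc] at h
    have hcard : ((i + 1 - 1 : ℕ) : ℝ) = (i:ℝ) := by norm_num
    rw [hq]
    rw [div_le_iff₀ (by positivity)] at h
    calc L ^ (q+1) ≤ (∑ j ∈ Finset.Icc 1 i, σ j ^ (q+1)) * ((i + 1 - 1 : ℕ):ℝ) ^ q := h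
      _ = (i:ℝ)^q * S := by rw [hcard, hS, hq]; ring
  -- step: (L/i)^(l1+l2) ≤ S/i
  have hdiv : (L / (i:ℝ)) ^ (l1+l2) ≤ S / (i:ℝ) := by
    rw [div_pow, div_le_div_iff₀ (by positivity) hci]
    calc L ^ (l1+l2) * (i:ℝ) ≤ ((i:ℝ)^q * S) * (i:ℝ) :=
          mul_le_mul_of_nonneg_right hpm hci.le
      _ = S * (i:ℝ)^(l1+l2) := by rw [hq]; ring
  have hLc0 : 0 ≤ L / (i:ℝ) := by positivity
  have hil1 : (i:ℝ)^l1 = (i:ℝ)^(l1-1) * (i:ℝ) := by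
    conv_lhs => rw [show l1 = (l1-1)+1 by omega]
    rw [pow_succ]
  calc g ^ l1 * y ^ l2 ≤ L ^ l1 * y ^ l2 :=
        mul_le_mul_of_nonneg_right (pow_le_pow_left₀ hg0 hgL l1) (by positivity)
    _ = (i:ℝ)^l1 * ((L/(i:ℝ)) ^ l1 * y ^ l2) := by
        rw [div_pow]; field_simp
    _ ≤ (i:ℝ)^l1 * (((l1:ℝ) * (L/(i:ℝ))^(l1+l2) + (l2:ℝ) * y^(l1+l2)) / ((l1:ℝ)+l2)) :=
        mul_le_mul_of_nonneg_left (young2 l1 l2 hl1 hl2 hLc0 hy) (by positivity)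
    _ ≤ (i:ℝ)^l1 * (((l1:ℝ) * (S/(i:ℝ)) + (l2:ℝ) * y^(l1+l2)) / ((l1:ℝ)+l2)) := by
        gcongr
    _ = ((l1:ℝ) * (i:ℝ)^(l1-1) * S + (l2:ℝ) * (i:ℝ)^l1 * y^(l1+l2)) / ((l1:ℝ)+(l2:ℝ)) := by
        rw [hil1]; field_simp
/-- Discrete Opial core lemma, unshifted version. -/
lemma coreA (l1 l2 : ℕ) (hl1 : 1 ≤ l1) (hl2 : 1 ≤ l2) (n : ℕ) (σ g : ℕ → ℝ)
    (hσ : ∀ j, 0 ≤ σ j)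
    (hg : ∀ i ∈ Finset.Icc 1 n, 0 ≤ g i ∧ g i ≤ ∑ j ∈ Finset.Icc 1 i, σ j) :
    ∑ i ∈ Finset.Icc 1 n, g i ^ l1 * σ i ^ l2
      ≤ (l2 : ℝ) * ((n:ℝ)+1)^l1 / ((l1:ℝ)+l2) * ∑ j ∈ Finset.Icc 1 n, σ j ^ (l1+l2) := by
  have hl1' : (1:ℝ) ≤ (l1:ℝ) := by exact_mod_cast hl1
  have hl2' : (1:ℝ) ≤ (l2:ℝ) := by exact_mod_cast hl2
  have hp : (0:ℝ) < (l1:ℝ)+(l2:ℝ) := by linarith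
  -- swap helper
  have hswap : ∑ i ∈ Finset.Icc 1 n, (l1:ℝ) * (i:ℝ)^(l1-1) * (∑ j ∈ Finset.Icc 1 i, σ j ^ (l1+l2))
      = ∑ j ∈ Finset.Icc 1 n, (∑ i ∈ Finset.Icc j n, (l1:ℝ) * (i:ℝ)^(l1-1)) * σ j ^ (l1+l2) := by
    have e1 : ∀ i ∈ Finset.Icc 1 n,
        (l1:ℝ) * (i:ℝ)^(l1-1) * (∑ j ∈ Finset.Icc 1 i, σ j ^ (l1+l2))
          = ∑ j ∈ Finset.Icc 1 n, (if j ≤ i then (l1:ℝ) * (i:ℝ)^(l1-1) * σ j ^ (l1+l2) else 0) := by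
      intro i hi
      rw [Finset.sum_ite, Finset.sum_const_zero, add_zero, Finset.mul_sum]
      apply Finset.sum_congr
      · ext j; simp only [Finset.mem_filter, Finset.mem_Icc] at *; omega
      · intro j _; ring
    rw [Finset.sum_congr rfl e1, Finset.sum_comm]
    apply Finset.sum_congr rfl
    intro j hj
    simp only [Finset.mem_Icc] at hj
    rw [Finset.sum_ite, Finset.sum_const_zero, add_zero, Finset.sum_mul]
    apply Finset.sum_congr
    · ext i; simp only [Finset.mem_filter, Finset.mem_Icc]; omega
    · intro i _; rfl
  -- coefficient bound
  have hcoef : ∀ j ∈ Finset.Icc 1 n,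
      (∑ i ∈ Finset.Icc j n, (l1:ℝ) * (i:ℝ)^(l1-1)) + (l2:ℝ) * (j:ℝ)^l1
        ≤ (l2:ℝ) * ((n:ℝ)+1)^l1 := by
    intro j hj
    simp only [Finset.mem_Icc] at hj
    have h1 : ∑ i ∈ Finset.Icc j n, (l1:ℝ) * (i:ℝ)^(l1-1)
        ≤ ∑ i ∈ Finset.Icc j n, (((i+1:ℕ):ℝ)^l1 - ((i:ℕ):ℝ)^l1) := by
      apply Finset.sum_le_sum
      intro i _
      obtain ⟨t, rfl⟩ : ∃ t, l1 = t+1 := ⟨l1-1, by omega⟩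
      have := bern t (x := (i:ℝ)) (by positivity)
      push_cast
      simpa using this
    have h2 : ∑ i ∈ Finset.Icc j n, (((i+1:ℕ):ℝ)^l1 - ((i:ℕ):ℝ)^l1)
        = ((n+1:ℕ):ℝ)^l1 - (j:ℝ)^l1 := tele (fun i => ((i:ℕ):ℝ)^l1) j n (by omega)
    have h3 : (j:ℝ)^l1 ≤ ((n:ℝ)+1)^l1 := by
      apply pow_le_pow_left₀ (by positivity)
      have : (j:ℝ) ≤ (n:ℝ) := by exact_mod_cast hj.2
      linarith
    have h4 : ((n+1:ℕ):ℝ) = (n:ℝ)+1 := by push_cast; ring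
    rw [h4] at h2
    nlinarith [h1, h2, h3]
  -- main chain
  calc ∑ i ∈ Finset.Icc 1 n, g i ^ l1 * σ i ^ l2
      ≤ ∑ i ∈ Finset.Icc 1 n, ((l1:ℝ) * (i:ℝ)^(l1-1) * (∑ j ∈ Finset.Icc 1 i, σ j ^ (l1+l2))
          + (l2:ℝ) * (i:ℝ)^l1 * σ i ^(l1+l2)) / ((l1:ℝ)+(l2:ℝ)) := by
        apply Finset.sum_le_sum
        intro i hi
        simp only [Finset.mem_Icc] at hi
        exact termb l1 l2 hl1 hl2 i hi.1 σ hσ (g i) (σ i) (hg i (by simp [Finset.mem_Icc]; omega)).1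
          (hσ i) (hg i (by simp [Finset.mem_Icc]; omega)).2
    _ = ((∑ i ∈ Finset.Icc 1 n, (l1:ℝ) * (i:ℝ)^(l1-1) * (∑ j ∈ Finset.Icc 1 i, σ j ^ (l1+l2)))
          + ∑ i ∈ Finset.Icc 1 n, (l2:ℝ) * (i:ℝ)^l1 * σ i ^ (l1+l2)) / ((l1:ℝ)+(l2:ℝ)) := by
        rw [← Finset.sum_div, ← Finset.sum_add_distrib]
    _ = (∑ j ∈ Finset.Icc 1 n, ((∑ i ∈ Finset.Icc j n, (l1:ℝ) * (i:ℝ)^(l1-1))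
          + (l2:ℝ) * (j:ℝ)^l1) * σ j ^ (l1+l2)) / ((l1:ℝ)+(l2:ℝ)) := by
        rw [hswap, ← Finset.sum_add_distrib]
        congr 1
        apply Finset.sum_congr rfl
        intro j _
        ring
    _ ≤ (∑ j ∈ Finset.Icc 1 n, ((l2:ℝ) * ((n:ℝ)+1)^l1) * σ j ^ (l1+l2)) / ((l1:ℝ)+(l2:ℝ)) := by
        gcongr with j hj
        · exact pow_nonneg (hσ j) _
        · exact hcoef j hj
    _ = (l2 : ℝ) * ((n:ℝ)+1)^l1 / ((l1:ℝ)+l2) * ∑ j ∈ Finset.Icc 1 n, σ j ^ (l1+l2) := by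
        rw [← Finset.mul_sum]
        ring
/-- Discrete Opial core lemma, shifted version. -/
lemma coreB (l1 l2 : ℕ) (hl1 : 1 ≤ l1) (hl2 : 1 ≤ l2) (n : ℕ) (σ g : ℕ → ℝ)
    (hσ : ∀ j, 0 ≤ σ j)
    (hg : ∀ i ∈ Finset.Icc 1 n, 0 ≤ g i ∧ g i ≤ ∑ j ∈ Finset.Icc 1 i, σ j) :
    ∑ i ∈ Finset.Icc 1 n, g i ^ l1 * σ (i+1) ^ l2
      ≤ (l2 : ℝ) * ((n:ℝ)+1)^l1 / ((l1:ℝ)+l2) * ∑ j ∈ Finset.Icc 1 (n+1), σ j ^ (l1+l2) := by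
  have hl1' : (1:ℝ) ≤ (l1:ℝ) := by exact_mod_cast hl1
  have hl2' : (1:ℝ) ≤ (l2:ℝ) := by exact_mod_cast hl2
  have hp : (0:ℝ) < (l1:ℝ)+(l2:ℝ) := by linarith
  have hswap : ∑ i ∈ Finset.Icc 1 n, (l1:ℝ) * (i:ℝ)^(l1-1) * (∑ j ∈ Finset.Icc 1 i, σ j ^ (l1+l2))
      = ∑ j ∈ Finset.Icc 1 n, (∑ i ∈ Finset.Icc j n, (l1:ℝ) * (i:ℝ)^(l1-1)) * σ j ^ (l1+l2) := by
    have e1 : ∀ i ∈ Finset.Icc 1 n,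
        (l1:ℝ) * (i:ℝ)^(l1-1) * (∑ j ∈ Finset.Icc 1 i, σ j ^ (l1+l2))
          = ∑ j ∈ Finset.Icc 1 n, (if j ≤ i then (l1:ℝ) * (i:ℝ)^(l1-1) * σ j ^ (l1+l2) else 0) := by
      intro i hi
      rw [Finset.sum_ite, Finset.sum_const_zero, add_zero, Finset.mul_sum]
      apply Finset.sum_congr
      · ext j; simp only [Finset.mem_filter, Finset.mem_Icc] at *; omega
      · intro j _; ring
    rw [Finset.sum_congr rfl e1, Finset.sum_comm]
    apply Finset.sum_congr rfl
    intro j hj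
    simp only [Finset.mem_Icc] at hj
    rw [Finset.sum_ite, Finset.sum_const_zero, add_zero, Finset.sum_mul]
    apply Finset.sum_congr
    · ext i; simp only [Finset.mem_filter, Finset.mem_Icc]; omega
    · intro i _; rfl
  have hcoefA : ∀ j ∈ Finset.Icc 1 n,
      (∑ i ∈ Finset.Icc j n, (l1:ℝ) * (i:ℝ)^(l1-1))
        ≤ (l2:ℝ) * (((n:ℝ)+1)^l1 - (j:ℝ)^l1) := by
    intro j hj
    simp only [Finset.mem_Icc] at hj
    have h1 : ∑ i ∈ Finset.Icc j n, (l1:ℝ) * (i:ℝ)^(l1-1)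
        ≤ ∑ i ∈ Finset.Icc j n, (((i+1:ℕ):ℝ)^l1 - ((i:ℕ):ℝ)^l1) := by
      apply Finset.sum_le_sum
      intro i _
      obtain ⟨t, rfl⟩ : ∃ t, l1 = t+1 := ⟨l1-1, by omega⟩
      have := bern t (x := (i:ℝ)) (by positivity)
      push_cast
      simpa using this
    have h2 : ∑ i ∈ Finset.Icc j n, (((i+1:ℕ):ℝ)^l1 - ((i:ℕ):ℝ)^l1)
        = ((n+1:ℕ):ℝ)^l1 - (j:ℝ)^l1 := tele (fun i => ((i:ℕ):ℝ)^l1) j n (by omega)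
    have h3 : (j:ℝ)^l1 ≤ ((n:ℝ)+1)^l1 := by
      apply pow_le_pow_left₀ (by positivity)
      have : (j:ℝ) ≤ (n:ℝ) := by exact_mod_cast hj.2
      linarith
    have h4 : ((n+1:ℕ):ℝ) = (n:ℝ)+1 := by push_cast; ring
    rw [h4] at h2
    nlinarith [h1, h2, h3]
  -- reindex of the second part
  have hB : ∑ i ∈ Finset.Icc 1 n, (l2:ℝ) * (i:ℝ)^l1 * σ (i+1) ^ (l1+l2)
      ≤ ∑ j ∈ Finset.Icc 1 (n+1), (l2:ℝ) * (j:ℝ)^l1 * σ j ^ (l1+l2) := by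
    have e : ∑ i ∈ Finset.Icc 1 n, (l2:ℝ) * (i:ℝ)^l1 * σ (i+1) ^ (l1+l2)
        = ∑ j ∈ Finset.Icc 2 (n+1), (l2:ℝ) * (((j-1:ℕ)):ℝ)^l1 * σ j ^ (l1+l2) := by
      apply Finset.sum_nbij' (fun i => i+1) (fun j => j-1)
      · intro a ha; simp only [Finset.mem_Icc] at *; omega
      · intro a ha; simp only [Finset.mem_Icc] at *; omega
      · intro a _; omega
      · intro a ha; simp only [Finset.mem_Icc] at ha; omega
      · intro a _
        simp
    rw [e]
    calc ∑ j ∈ Finset.Icc 2 (n+1), (l2:ℝ) * (((j-1:ℕ)):ℝ)^l1 * σ j ^ (l1+l2)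
        ≤ ∑ j ∈ Finset.Icc 2 (n+1), (l2:ℝ) * (j:ℝ)^l1 * σ j ^ (l1+l2) := by
          apply Finset.sum_le_sum
          intro j _
          have h5 : (((j-1:ℕ)):ℝ) ≤ (j:ℝ) := by exact_mod_cast Nat.sub_le j 1
          have h6 := pow_le_pow_left₀ (by positivity : (0:ℝ) ≤ ((j-1:ℕ):ℝ)) h5 l1
          exact mul_le_mul_of_nonneg_right
            (mul_le_mul_of_nonneg_left h6 (by positivity)) (pow_nonneg (hσ j) _)
      _ ≤ ∑ j ∈ Finset.Icc 1 (n+1), (l2:ℝ) * (j:ℝ)^l1 * σ j ^ (l1+l2) := by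
          apply Finset.sum_le_sum_of_subset_of_nonneg
          · intro x hx; simp only [Finset.mem_Icc] at *; omega
          · intro j _ _
            have := pow_nonneg (hσ j) (l1+l2)
            positivity
  have h1n : 1 ≤ n + 1 := by omega
  have hnum : (∑ j ∈ Finset.Icc 1 n, (l2:ℝ) * (((n:ℝ)+1)^l1 - (j:ℝ)^l1) * σ j ^ (l1+l2))
      + ∑ j ∈ Finset.Icc 1 (n+1), (l2:ℝ) * (j:ℝ)^l1 * σ j ^ (l1+l2)
      = (l2:ℝ) * ((n:ℝ)+1)^l1 * ∑ j ∈ Finset.Icc 1 (n+1), σ j ^ (l1+l2) := by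
    rw [Finset.mul_sum,
      Finset.sum_Icc_succ_top h1n (f := fun j => (l2:ℝ) * (j:ℝ)^l1 * σ j ^ (l1+l2)),
      Finset.sum_Icc_succ_top h1n (f := fun j => (l2:ℝ) * ((n:ℝ)+1)^l1 * σ j ^ (l1+l2)),
      ← add_assoc, ← Finset.sum_add_distrib]
    congr 1
    · apply Finset.sum_congr rfl
      intro j _
      ring
    · push_cast
      ring
  calc ∑ i ∈ Finset.Icc 1 n, g i ^ l1 * σ (i+1) ^ l2
      ≤ ∑ i ∈ Finset.Icc 1 n, ((l1:ℝ) * (i:ℝ)^(l1-1) * (∑ j ∈ Finset.Icc 1 i, σ j ^ (l1+l2))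
          + (l2:ℝ) * (i:ℝ)^l1 * σ (i+1) ^(l1+l2)) / ((l1:ℝ)+(l2:ℝ)) := by
        apply Finset.sum_le_sum
        intro i hi
        simp only [Finset.mem_Icc] at hi
        exact termb l1 l2 hl1 hl2 i hi.1 σ hσ (g i) (σ (i+1))
          (hg i (by simp [Finset.mem_Icc]; omega)).1
          (hσ (i+1)) (hg i (by simp [Finset.mem_Icc]; omega)).2
    _ = ((∑ i ∈ Finset.Icc 1 n, (l1:ℝ) * (i:ℝ)^(l1-1) * (∑ j ∈ Finset.Icc 1 i, σ j ^ (l1+l2)))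
          + ∑ i ∈ Finset.Icc 1 n, (l2:ℝ) * (i:ℝ)^l1 * σ (i+1) ^ (l1+l2)) / ((l1:ℝ)+(l2:ℝ)) := by
        rw [← Finset.sum_div, ← Finset.sum_add_distrib]
    _ ≤ ((∑ j ∈ Finset.Icc 1 n, (l2:ℝ) * (((n:ℝ)+1)^l1 - (j:ℝ)^l1) * σ j ^ (l1+l2))
          + ∑ j ∈ Finset.Icc 1 (n+1), (l2:ℝ) * (j:ℝ)^l1 * σ j ^ (l1+l2)) / ((l1:ℝ)+(l2:ℝ)) := by
        apply (div_le_div_iff_of_pos_right hp).mpr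
        apply add_le_add ?_ hB
        rw [hswap]
        apply Finset.sum_le_sum
        intro j hj
        exact mul_le_mul_of_nonneg_right (hcoefA j hj) (pow_nonneg (hσ j) _)
    _ = ((l2:ℝ) * ((n:ℝ)+1)^l1 * ∑ j ∈ Finset.Icc 1 (n+1), σ j ^ (l1+l2)) / ((l1:ℝ)+(l2:ℝ)) := by
        rw [hnum]
    _ = (l2 : ℝ) * ((n:ℝ)+1)^l1 / ((l1:ℝ)+l2) * ∑ j ∈ Finset.Icc 1 (n+1), σ j ^ (l1+l2) := by
        ring
section intervalNorm

lemma abs_min_le' (x y : ℝ) : |min x y| ≤ max |x| |y| := by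
  rcases le_total x y with h | h
  · rw [min_eq_left h]; exact le_max_left _ _
  · rw [min_eq_right h]; exact le_max_right _ _

lemma abs_max_le' (x y : ℝ) : |max x y| ≤ max |x| |y| := by
  rcases le_total x y with h | h
  · rw [max_eq_right h]; exact le_max_right _ _
  · rw [max_eq_left h]; exact le_max_left _ _

lemma inorm_nonneg' (u : ℝ × ℝ) : 0 ≤ inorm u :=
  le_trans (abs_nonneg _) (le_max_left _ _)

lemma max4_abs (a b c d : ℝ) :
    max |min (min a b) (min c d)| |max (max a b) (max c d)|
      = max (max |a| |b|) (max |c| |d|) := by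
  apply le_antisymm
  · apply max_le
    · exact le_trans (abs_min_le' _ _) (max_le_max (abs_min_le' _ _) (abs_min_le' _ _))
    · exact le_trans (abs_max_le' _ _) (max_le_max (abs_max_le' _ _) (abs_max_le' _ _))
  · have hmin : ∀ x : ℝ, min (min a b) (min c d) ≤ x → x ≤ max (max a b) (max c d) →
        |x| ≤ max |min (min a b) (min c d)| |max (max a b) (max c d)| :=
      fun x h1 h2 => abs_le_max_abs_abs h1 h2
    apply max_le <;> apply max_le
    · exact hmin a (le_trans (min_le_left _ _) (min_le_left _ _))
        (le_trans (le_max_left _ _) (le_max_left _ _))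
    · exact hmin b (le_trans (min_le_left _ _) (min_le_right _ _))
        (le_trans (le_max_right _ _) (le_max_left _ _))
    · exact hmin c (le_trans (min_le_right _ _) (min_le_left _ _))
        (le_trans (le_max_left _ _) (le_max_right _ _))
    · exact hmin d (le_trans (min_le_right _ _) (min_le_right _ _))
        (le_trans (le_max_right _ _) (le_max_right _ _))

lemma inorm_imul (u v : ℝ × ℝ) : inorm (imul u v) = inorm u * inorm v := by
  show max |min (min (u.1 * v.1) (u.1 * v.2)) (min (u.2 * v.1) (u.2 * v.2))|
      |max (max (u.1 * v.1) (u.1 * v.2)) (max (u.2 * v.1) (u.2 * v.2))|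
      = max |u.1| |u.2| * max |v.1| |v.2|
  rw [max4_abs, abs_mul, abs_mul, abs_mul, abs_mul]
  rw [← mul_max_of_nonneg _ _ (abs_nonneg u.1), ← mul_max_of_nonneg _ _ (abs_nonneg u.2),
    ← max_mul_of_nonneg _ _ (le_trans (abs_nonneg v.1) (le_max_left _ _))]

lemma inorm_ipowI (a b : ℝ) (hab : a ≤ b) (n : ℕ) :
    inorm (ipowI (a, b) n) = (max |a| |b|) ^ n := by
  set M := max |a| |b| with hM
  have hM0 : 0 ≤ M := le_trans (abs_nonneg _) (le_max_left _ _)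
  set S := (fun t : ℝ => t ^ n) '' Set.Icc a b with hSdef
  have hne : S.Nonempty := ⟨a ^ n, ⟨a, ⟨le_refl a, hab⟩, rfl⟩⟩
  have habs : ∀ s ∈ S, |s| ≤ M ^ n := by
    rintro s ⟨t, ht, rfl⟩
    rw [abs_pow]
    apply pow_le_pow_left₀ (abs_nonneg t)
    rw [abs_le]
    constructor
    · have : -M ≤ -|a| := neg_le_neg (le_max_left _ _)
      linarith [neg_abs_le a, ht.1]
    · linarith [le_abs_self b, ht.2, le_max_right |a| |b|]
  have hub : ∀ s ∈ S, s ≤ M ^ n := fun s hs => le_trans (le_abs_self s) (habs s hs)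
  have hlb : ∀ s ∈ S, -(M ^ n) ≤ s := fun s hs => by
    have := habs s hs; rw [abs_le] at this; exact this.1
  have hba : BddAbove S := ⟨M ^ n, fun s hs => hub s hs⟩
  have hbb : BddBelow S := ⟨-(M ^ n), fun s hs => hlb s hs⟩
  obtain ⟨t0, ht0S, ht0⟩ : ∃ t0, t0 ^ n ∈ S ∧ |t0| = M := by
    rcases le_total |a| |b| with h | h
    · exact ⟨b, ⟨b, ⟨hab, le_refl b⟩, rfl⟩, (max_eq_right h).symm⟩
    · exact ⟨a, ⟨a, ⟨le_refl a, hab⟩, rfl⟩, (max_eq_left h).symm⟩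
  have h1 : sInf S ≤ t0 ^ n := csInf_le hbb ht0S
  have h2 : t0 ^ n ≤ sSup S := le_csSup hba ht0S
  have h3 : sSup S ≤ M ^ n := csSup_le hne hub
  have h4 : -(M ^ n) ≤ sInf S := le_csInf hne hlb
  have habs0 : |t0 ^ n| = M ^ n := by rw [abs_pow, ht0]
  show max |sInf S| |sSup S| = M ^ n
  apply le_antisymm
  · apply max_le
    · rw [abs_le]
      exact ⟨h4, le_trans h1 (le_trans (le_abs_self _) (le_of_eq habs0))⟩
    · rw [abs_le]
      refine ⟨le_trans ?_ h2, h3⟩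
      calc -(M^n) = -|t0^n| := by rw [habs0]
        _ ≤ t0 ^ n := neg_abs_le _
  · calc M ^ n = |t0 ^ n| := habs0.symm
      _ ≤ max |sInf S| |sSup S| := abs_le_max_abs_abs h1 h2

end intervalNorm
lemma revsum (f : ℕ → ℝ) (a b : ℕ) (hab : a ≤ b) :
    ∑ j ∈ Finset.Ioc a b, f j = ∑ j ∈ Finset.Icc 1 (b - a), f (b + 1 - j) := by
  apply Finset.sum_nbij' (fun j => b + 1 - j) (fun j => b + 1 - j)
  · intro x hx; simp only [Finset.mem_Ioc, Finset.mem_Icc] at *; omega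
  · intro x hx; simp only [Finset.mem_Ioc, Finset.mem_Icc] at *; omega
  · intro x hx; simp only [Finset.mem_Ioc] at hx; omega
  · intro x hx; simp only [Finset.mem_Icc] at hx; omega
  · intro x hx
    simp only [Finset.mem_Ioc] at hx
    congr 1
    omega

noncomputable def dI (lo hi : ℕ → ℝ) (i : ℕ) : ℝ :=
  inorm (gH (lo i, hi i) (lo (i-1), hi (i-1)))

theorem interval_opial_up_down
    (m : ℕ) (lo hi : ℕ → ℝ) (l1 l2 : ℕ)
    (hl1 : 1 ≤ l1) (hl2 : 1 ≤ l2)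
    (hvalid : ∀ i ≤ m, lo i ≤ hi i)
    (h0 : lo 0 = 0 ∧ hi 0 = 0) (hmend : lo m = 0 ∧ hi m = 0)
    (k : ℕ) (hk1 : 1 ≤ k) (hkm : k ≤ m - 1)
    (hup : ∀ i < k, lo i ≤ lo (i + 1) ∧ hi i ≤ hi (i + 1) ∧
            hi i - lo i ≤ hi (i + 1) - lo (i + 1))
    (hdown : ∀ i, k ≤ i → i < m → lo (i + 1) ≤ lo i ∧ hi (i + 1) ≤ hi i ∧
            hi (i + 1) - lo (i + 1) ≤ hi i - lo i) :
    ∑ i ∈ Finset.Icc 1 (m - 1),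
        inorm (imul (ipowI (lo i, hi i) l1)
                    (ipowI (gH (lo i, hi i) (lo (i - 1), hi (i - 1))) l2))
      ≤ ((l2 : ℝ) * ((m / 2 : ℕ) + 1 : ℝ) ^ l1) / ((l1 : ℝ) + (l2 : ℝ)) *
        ∑ i ∈ Finset.Icc 1 m,
          (inorm (gH (lo i, hi i) (lo (i - 1), hi (i - 1)))) ^ (l1 + l2) := by
  obtain ⟨hlo0, hhi0⟩ := h0
  obtain ⟨hlom, hhim⟩ := hmend
  have hm2 : 2 ≤ m := by omega
  have hl1' : (1:ℝ) ≤ (l1:ℝ) := by exact_mod_cast hl1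
  have hl2' : (1:ℝ) ≤ (l2:ℝ) := by exact_mod_cast hl2
  have hp : (0:ℝ) < (l1:ℝ)+(l2:ℝ) := by linarith
  have hr1 : 1 ≤ m / 2 := by omega
  have hrm1 : m / 2 ≤ m - 1 := by omega
  set d : ℕ → ℝ := dI lo hi with hd
  have hd0 : ∀ i, 0 ≤ d i := fun i => inorm_nonneg' _
  -- nonnegativity of endpoints
  have hup_lo : ∀ b, b ≤ k → 0 ≤ lo b := by
    intro b
    induction b with
    | zero => intro _; rw [hlo0]
    | succ b ih =>
      intro hb
      have h1 := (hup b (by omega)).1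
      have h2 := ih (by omega)
      linarith
  have hdown_lo : ∀ t, ∀ b, k ≤ b → b + t = m → lo m ≤ lo b := by
    intro t
    induction t with
    | zero =>
      intro b _ he
      have hbm : b = m := by omega
      exact le_of_eq (by rw [hbm])
    | succ t ih =>
      intro b hkb he
      have h1 := (hdown b hkb (by omega)).1
      have h2 := ih (b+1) (by omega) (by omega)
      linarith
  have hlo_nn : ∀ i, i ≤ m → 0 ≤ lo i := by
    intro i him
    rcases le_total i k with h | h
    · exact hup_lo i h
    · have := hdown_lo (m - i) i h (by omega)
      rw [hlom] at this
      exact this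
  have hhi_nn : ∀ i, i ≤ m → 0 ≤ hi i := fun i h => le_trans (hlo_nn i h) (hvalid i h)
  -- d dominates the jumps of hi
  have hdd : ∀ i, |hi i - hi (i-1)| ≤ d i := by
    intro i
    show |hi i - hi (i-1)| ≤ max |min (lo i - lo (i-1)) (hi i - hi (i-1))|
      |max (lo i - lo (i-1)) (hi i - hi (i-1))|
    exact abs_le_max_abs_abs (min_le_right _ _) (le_max_right _ _)
  -- head bound
  have hhead : ∀ i, hi i ≤ ∑ j ∈ Finset.Icc 1 i, d j := by
    intro i
    induction i with
    | zero => simp [hhi0]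
    | succ i ih =>
      rw [Finset.sum_Icc_succ_top (by omega : 1 ≤ i+1)]
      have h5 := hdd (i+1)
      have h6 : (i+1) - 1 = i := by omega
      rw [h6] at h5
      have h7 : hi (i+1) - hi i ≤ d (i+1) := le_trans (le_abs_self _) h5
      linarith
  -- tail bound
  have htail : ∀ t, ∀ i, i + t = m → hi i ≤ ∑ j ∈ Finset.Ioc i m, d j := by
    intro t
    induction t with
    | zero =>
      intro i he
      have : i = m := by omega
      rw [this]
      simp [hhim]
    | succ t ih =>
      intro i he
      have h8 := ih (i+1) (by omega)
      have h5 := hdd (i+1)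
      have h6 : (i+1) - 1 = i := by omega
      rw [h6] at h5
      rw [abs_sub_comm] at h5
      have h7 : hi i - hi (i+1) ≤ d (i+1) := le_trans (le_abs_self _) h5
      have hsum : d (i+1) + ∑ j ∈ Finset.Ioc (i+1) m, d j = ∑ j ∈ Finset.Ioc i m, d j := by
        rw [← Finset.sum_Ioc_consecutive d (by omega : i ≤ i+1) (by omega : i+1 ≤ m),
          Nat.Ioc_succ_singleton, Finset.sum_singleton]
      linarith
  -- summand rewriting
  have hsummand : ∀ i ∈ Finset.Icc 1 (m-1),
      inorm (imul (ipowI (lo i, hi i) l1)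
        (ipowI (gH (lo i, hi i) (lo (i - 1), hi (i - 1))) l2))
        = hi i ^ l1 * d i ^ l2 := by
    intro i hi'
    simp only [Finset.mem_Icc] at hi'
    have him : i ≤ m := by omega
    rw [inorm_imul]
    rw [inorm_ipowI _ _ (hvalid i him) l1]
    have hgHpair : gH (lo i, hi i) (lo (i-1), hi (i-1))
        = (min (lo i - lo (i-1)) (hi i - hi (i-1)),
           max (lo i - lo (i-1)) (hi i - hi (i-1))) := rfl
    rw [hgHpair, inorm_ipowI _ _ (min_le_max) l2]
    have e1 : max |lo i| |hi i| = hi i := by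
      rw [abs_of_nonneg (hlo_nn i him), abs_of_nonneg (hhi_nn i him),
        max_eq_right (hvalid i him)]
    rw [e1]
    rfl
  have hIccIoc : ∀ x : ℕ, Finset.Icc 1 x = Finset.Ioc 0 x := by
    intro x; ext t; simp only [Finset.mem_Icc, Finset.mem_Ioc]; omega
  -- the two halves
  have upBound : ∑ i ∈ Finset.Icc 1 (m/2), hi i ^ l1 * d i ^ l2
      ≤ (l2 : ℝ) * ((m/2 : ℕ) + 1 : ℝ) ^ l1 / ((l1:ℝ)+(l2:ℝ))
        * ∑ j ∈ Finset.Icc 1 (m/2), d j ^ (l1+l2) := by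
    apply coreA l1 l2 hl1 hl2 (m/2) d hi hd0
    intro i hi'
    simp only [Finset.mem_Icc] at hi'
    exact ⟨hhi_nn i (by omega), hhead i⟩
  have downBound : ∑ i ∈ Finset.Ioc (m/2) (m-1), hi i ^ l1 * d i ^ l2
      ≤ (l2 : ℝ) * ((m/2 : ℕ) + 1 : ℝ) ^ l1 / ((l1:ℝ)+(l2:ℝ))
        * ∑ j ∈ Finset.Ioc (m/2) m, d j ^ (l1+l2) := by
    have hre : ∑ i ∈ Finset.Ioc (m/2) (m-1), hi i ^ l1 * d i ^ l2
        = ∑ t ∈ Finset.Icc 1 (m-1-m/2), hi (m-t) ^ l1 * d (m-t) ^ l2 := by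
      apply Finset.sum_nbij' (fun i => m - i) (fun t => m - t)
      · intro x hx; simp only [Finset.mem_Ioc, Finset.mem_Icc] at *; omega
      · intro x hx; simp only [Finset.mem_Ioc, Finset.mem_Icc] at *; omega
      · intro x hx; simp only [Finset.mem_Ioc] at hx; omega
      · intro x hx; simp only [Finset.mem_Icc] at hx; omega
      · intro x hx
        simp only [Finset.mem_Ioc] at hx
        have : m - (m - x) = x := by omega
        rw [this]
    have hcore := coreB l1 l2 hl1 hl2 (m-1-m/2) (fun j => d (m+1-j)) (fun t => hi (m-t))
      (fun j => hd0 _) ?hg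
    case hg =>
      intro t ht
      simp only [Finset.mem_Icc] at ht
      constructor
      · exact hhi_nn (m-t) (by omega)
      · have h9 := htail t (m-t) (by omega)
        have h10 := revsum d (m-t) m (by omega)
        have h11 : m - (m - t) = t := by omega
        rw [h11] at h10
        rw [h10] at h9
        exact h9
    -- match the summand of hcore with our sum
    have hmatch : ∑ i ∈ Finset.Icc 1 (m-1-m/2),
        (fun t => hi (m-t)) i ^ l1 * (fun j => d (m+1-j)) (i+1) ^ l2
        = ∑ t ∈ Finset.Icc 1 (m-1-m/2), hi (m-t) ^ l1 * d (m-t) ^ l2 := by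
      apply Finset.sum_congr rfl
      intro t _
      have : m + 1 - (t+1) = m - t := by omega
      simp only [this]
    rw [hmatch] at hcore
    rw [hre]
    -- convert RHS of hcore
    have h12 : m - 1 - m/2 + 1 = m - m/2 := by omega
    have h13 : ∑ j ∈ Finset.Icc 1 (m-1-m/2+1), (fun j => d (m+1-j)) j ^ (l1+l2)
        = ∑ j ∈ Finset.Ioc (m/2) m, d j ^ (l1+l2) := by
      rw [h12]
      rw [revsum (fun j => d j ^ (l1+l2)) (m/2) m (by omega)]
    rw [h13] at hcore
    apply le_trans hcore
    -- compare the constants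
    apply mul_le_mul_of_nonneg_right _ (Finset.sum_nonneg fun j _ => pow_nonneg (hd0 j) _)
    apply (div_le_div_iff_of_pos_right hp).mpr
    have hcast : ((m-1-m/2 : ℕ):ℝ) + 1 ≤ ((m/2:ℕ):ℝ) + 1 := by
      have h14 : (m-1-m/2 : ℕ) ≤ m/2 := by omega
      have h15 := (Nat.cast_le (α := ℝ)).mpr h14
      linarith
    exact mul_le_mul_of_nonneg_left (pow_le_pow_left₀ (by positivity) hcast l1) (by positivity)
  -- final assembly
  calc ∑ i ∈ Finset.Icc 1 (m - 1),
        inorm (imul (ipowI (lo i, hi i) l1)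
                    (ipowI (gH (lo i, hi i) (lo (i - 1), hi (i - 1))) l2))
      = ∑ i ∈ Finset.Icc 1 (m-1), hi i ^ l1 * d i ^ l2 := Finset.sum_congr rfl hsummand
    _ = (∑ i ∈ Finset.Icc 1 (m/2), hi i ^ l1 * d i ^ l2)
        + ∑ i ∈ Finset.Ioc (m/2) (m-1), hi i ^ l1 * d i ^ l2 := by
        rw [hIccIoc (m-1), ← Finset.sum_Ioc_consecutive _ (Nat.zero_le (m/2)) hrm1,
          ← hIccIoc (m/2)]
    _ ≤ (l2 : ℝ) * ((m/2 : ℕ) + 1 : ℝ) ^ l1 / ((l1:ℝ)+(l2:ℝ))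
          * ∑ j ∈ Finset.Icc 1 (m/2), d j ^ (l1+l2)
        + (l2 : ℝ) * ((m/2 : ℕ) + 1 : ℝ) ^ l1 / ((l1:ℝ)+(l2:ℝ))
          * ∑ j ∈ Finset.Ioc (m/2) m, d j ^ (l1+l2) := add_le_add upBound downBound
    _ = (l2 : ℝ) * ((m/2 : ℕ) + 1 : ℝ) ^ l1 / ((l1:ℝ)+(l2:ℝ))
          * ∑ j ∈ Finset.Icc 1 m, d j ^ (l1+l2) := by
        rw [← mul_add, hIccIoc m,
          ← Finset.sum_Ioc_consecutive _ (Nat.zero_le (m/2)) (by omega : m/2 ≤ m),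
          ← hIccIoc (m/2)]
    _ = ((l2 : ℝ) * ((m / 2 : ℕ) + 1 : ℝ) ^ l1) / ((l1 : ℝ) + (l2 : ℝ)) *
        ∑ i ∈ Finset.Icc 1 m,
          (inorm (gH (lo i, hi i) (lo (i - 1), hi (i - 1)))) ^ (l1 + l2) := rfl
end
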